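/- arXiv:1602.07134 — 18 statements merged into one kernel-verified Lean document; each statement's English description precedes it below -/
import Mathlib

section
/- Let R be a commutative ring with 1 ≠ 0 and n a positive integer. A proper ideal I of R is a weakly n-absorbing ideal if and only if for every integer m > n and elements x₁,…,x_m ∈ R with 0 ≠ x₁⋯x_m ∈ I, there exist n of the x_i's whose product lies in I. -/
open Finset Polynomial

/-- `I` is a weakly `n`-absorbing ideal: `I` is proper and whenever a product of `n+1`
elements is nonzero and lies in `I`, some product of `n` of them lies in `I`. -/
def WeaklyAbsorbing {R : Type*} [CommRing R] (n : ℕ) (I : Ideal R) : Prop :=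
  I ≠ ⊤ ∧ ∀ a : Fin (n + 1) → R, (∏ i, a i) ≠ 0 → (∏ i, a i) ∈ I →
    ∃ j : Fin (n + 1), (∏ i ∈ univ.erase j, a i) ∈ I

/-- `I` is an `n`-absorbing ideal. -/
def Absorbing {R : Type*} [CommRing R] (n : ℕ) (I : Ideal R) : Prop :=
  I ≠ ⊤ ∧ ∀ a : Fin (n + 1) → R, (∏ i, a i) ∈ I →
    ∃ j : Fin (n + 1), (∏ i ∈ univ.erase j, a i) ∈ I

/-- `I` is a strongly weakly `n`-absorbing ideal. -/
def StronglyWeaklyAbsorbing {R : Type*} [CommRing R] (n : ℕ) (I : Ideal R) : Prop :=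
  I ≠ ⊤ ∧ ∀ J : Fin (n + 1) → Ideal R, (∏ i, J i) ≠ ⊥ → (∏ i, J i) ≤ I →
    ∃ j : Fin (n + 1), (∏ i ∈ univ.erase j, J i) ≤ I

/-- `I` is a weakly primary ideal. -/
def WeaklyPrimary {R : Type*} [CommRing R] (I : Ideal R) : Prop :=
  I ≠ ⊤ ∧ ∀ a b : R, a * b ≠ 0 → a * b ∈ I → a ∈ I ∨ b ∈ I.radical

/-- Finset version of the defining property of weakly `n`-absorbing ideals. -/
lemma WeaklyAbsorbing.finset {R : Type*} [CommRing R] {n : ℕ} {I : Ideal R}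
    (h : WeaklyAbsorbing n I) {ι : Type*} [DecidableEq ι] (s : Finset ι) (x : ι → R)
    (hs : s.card = n + 1) (h0 : (∏ i ∈ s, x i) ≠ 0) (hmem : (∏ i ∈ s, x i) ∈ I) :
    ∃ e ∈ s, (∏ i ∈ s.erase e, x i) ∈ I := by
  have hcard : Fintype.card {i // i ∈ s} = n + 1 := by
    simp [Fintype.card_coe, hs]
  let e : {i // i ∈ s} ≃ Fin (n + 1) := Fintype.equivFinOfCardEq hcard
  set a : Fin (n + 1) → R := fun j => x (e.symm j) with ha
  have hprod : (∏ j, a j) = ∏ i ∈ s, x i := by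
    rw [← Finset.prod_coe_sort s x, ha]
    exact e.symm.prod_comp fun i => x (i : ι)
  obtain ⟨j, hj⟩ := h.2 a (by rw [hprod]; exact h0) (by rw [hprod]; exact hmem)
  refine ⟨(e.symm j : ι), (e.symm j).2, ?_⟩
  have : (∏ i ∈ univ.erase j, a i) = ∏ i ∈ s.erase (e.symm j : ι), x i := by
    refine Finset.prod_bij (fun i _ => (e.symm i : ι)) ?_ ?_ ?_ ?_
    · intro i hi
      rcases Finset.mem_erase.mp hi with ⟨hne, -⟩
      refine Finset.mem_erase.mpr ⟨?_, (e.symm i).2⟩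
      intro hc
      exact hne (by simpa using e.symm.injective (Subtype.ext hc))
    · intro i₁ h₁ i₂ h₂ hcc
      exact e.symm.injective (Subtype.ext hcc)
    · intro y hy
      rcases Finset.mem_erase.mp hy with ⟨hne, hys⟩
      refine ⟨e ⟨y, hys⟩, Finset.mem_erase.mpr ⟨?_, mem_univ _⟩, by simp⟩
      intro hc
      apply hne
      have : e.symm (e ⟨y, hys⟩) = e.symm j := by rw [hc]
      simpa using congrArg Subtype.val (by simpa using this)
    · intro i hi; rfl
  rw [← this]
  exact hj

lemma WeaklyAbsorbing.finset_general {R : Type*} [CommRing R] {n : ℕ} {I : Ideal R}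
    (h : WeaklyAbsorbing n I) {ι : Type*} [DecidableEq ι] :
    ∀ (t : Finset ι) (x : ι → R), n < t.card → (∏ i ∈ t, x i) ≠ 0 → (∏ i ∈ t, x i) ∈ I →
      ∃ s ⊆ t, s.card = n ∧ (∏ i ∈ s, x i) ∈ I := by
  intro t
  induction t using Finset.strongInduction with
  | _ t ih =>
    intro x hcard h0 hmem
    obtain ⟨u, hu, hucard⟩ := Finset.exists_subset_card_eq (le_of_lt hcard)
    set y : Option ι → R := fun o => o.elim (∏ i ∈ t \ u, x i) x with hy
    have hnone : (none : Option ι) ∉ u.image some := by simp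
    set s' : Finset (Option ι) := insert none (u.image some) with hs'
    have hs'card : s'.card = n + 1 := by
      rw [hs', Finset.card_insert_of_notMem hnone,
        Finset.card_image_of_injective _ (Option.some_injective ι), hucard]
    have hprod : (∏ o ∈ s', y o) = ∏ i ∈ t, x i := by
      rw [hs', Finset.prod_insert hnone,
        Finset.prod_image (fun a _ b _ hab => Option.some_injective ι hab)]
      exact Finset.prod_sdiff hu
    obtain ⟨e, he, hemem⟩ := h.finset s' y hs'card (by rw [hprod]; exact h0)
      (by rw [hprod]; exact hmem)
    match e with
    | none =>
      refine ⟨u, hu, hucard, ?_⟩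
      rw [hs', Finset.erase_insert hnone,
        Finset.prod_image (fun a _ b _ hab => Option.some_injective ι hab)] at hemem
      exact hemem
    | some i =>
      have hiu : i ∈ u := by
        rcases Finset.mem_insert.mp he with hc | hc
        · exact absurd hc (by simp)
        · simpa using hc
      have hit : i ∈ t := hu hiu
      have herase : s'.erase (some i) = insert none ((u.erase i).image some) := by
        rw [hs', Finset.erase_insert_of_ne (by simp),
          Finset.image_erase (Option.some_injective ι)]
      have hsdiff : (t.erase i) \ (u.erase i) = t \ u := by
        ext j
        simp only [Finset.mem_sdiff, Finset.mem_erase]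
        constructor
        · rintro ⟨⟨hji, hjt⟩, hj⟩
          exact ⟨hjt, fun hju => hj ⟨hji, hju⟩⟩
        · rintro ⟨hjt, hju⟩
          exact ⟨⟨fun hc => hju (hc ▸ hiu), hjt⟩, fun hc => hju hc.2⟩
      have hprod2 : (∏ o ∈ s'.erase (some i), y o) = ∏ j ∈ t.erase i, x j := by
        rw [herase, Finset.prod_insert (by simp),
          Finset.prod_image (fun a _ b _ hab => Option.some_injective ι hab)]
        show (∏ j ∈ t \ u, x j) * ∏ j ∈ u.erase i, x j = _
        rw [← hsdiff]
        exact Finset.prod_sdiff (Finset.erase_subset_erase i hu)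
      rw [hprod2] at hemem
      have hne0 : (∏ j ∈ t.erase i, x j) ≠ 0 := by
        intro hc
        apply h0
        rw [← Finset.mul_prod_erase t x hit, hc, mul_zero]
      by_cases hcase : (t.erase i).card = n
      · exact ⟨t.erase i, Finset.erase_subset i t, hcase, hemem⟩
      · have hlt : n < (t.erase i).card := by
          have : n ≤ (t.erase i).card := by
            rw [Finset.card_erase_of_mem hit]
            omega
          omega
        obtain ⟨s, hsub, hscard, hsI⟩ :=
          ih (t.erase i) (Finset.erase_ssubset hit) x hlt hne0 hemem
        exact ⟨s, hsub.trans (Finset.erase_subset i t), hscard, hsI⟩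

theorem stmt0 {R : Type*} [CommRing R] [Nontrivial R] (n : ℕ) (hn : 0 < n)
    (I : Ideal R) (hI : I ≠ ⊤) :
    WeaklyAbsorbing n I ↔
      ∀ m : ℕ, n < m → ∀ x : Fin m → R, (∏ i, x i) ≠ 0 → (∏ i, x i) ∈ I →
        ∃ s : Finset (Fin m), s.card = n ∧ (∏ i ∈ s, x i) ∈ I := by
  constructor
  · intro h m hm x h0 hmem
    obtain ⟨s, -, hscard, hsI⟩ := h.finset_general (univ : Finset (Fin m)) x
      (by simpa using hm) h0 hmem
    exact ⟨s, hscard, hsI⟩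
  · intro H
    refine ⟨hI, fun a h0 hmem => ?_⟩
    obtain ⟨s, hscard, hsI⟩ := H (n + 1) (Nat.lt_succ_self n) a h0 hmem
    have hss : s ⊂ (univ : Finset (Fin (n + 1))) := by
      refine Finset.ssubset_univ_iff.mpr ?_
      intro hc
      rw [hc] at hscard
      simp at hscard
    obtain ⟨j, -, hjs⟩ := Finset.exists_of_ssubset hss
    have hsub : s ⊆ univ.erase j := Finset.subset_erase.mpr ⟨Finset.subset_univ s, hjs⟩
    have heq : s = univ.erase j := by
      apply Finset.eq_of_subset_of_card_le hsub
      rw [Finset.card_erase_of_mem (mem_univ j)]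
      simp [hscard]
    exact ⟨j, heq ▸ hsI⟩
end

section
/- Let R be a commutative ring, and for each 1 ≤ i ≤ k let I_i be a weakly n_i-absorbing ideal of R. Then I₁ ∩ ⋯ ∩ I_k is a weakly n-absorbing ideal of R for n = n₁ + ⋯ + n_k. -/
open Finset Polynomial

lemma weakly_key {R : Type*} [CommRing R] {n : ℕ} {I : Ideal R} (hI : WeaklyAbsorbing n I)
    {ι : Type*} [DecidableEq ι] (a : ι → R) :
    ∀ T : Finset ι, n ≤ T.card → (∏ i ∈ T, a i) ≠ 0 → (∏ i ∈ T, a i) ∈ I →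
      ∃ S ⊆ T, S.card = n ∧ (∏ i ∈ S, a i) ∈ I := by
  intro T
  induction T using Finset.strongInduction with
  | _ T ih =>
    intro hcard hne hmem
    rcases eq_or_lt_of_le hcard with hcard' | hcard'
    · exact ⟨T, le_refl T, hcard'.symm, hmem⟩
    obtain ⟨U, hUT, hUcard⟩ := Finset.exists_subset_card_eq hcard
    set e : Fin n → ι := fun i => ((Finset.equivFinOfCardEq hUcard).symm i : ι) with he
    have heinj : Function.Injective e :=
      Subtype.val_injective.comp (Finset.equivFinOfCardEq hUcard).symm.injective
    have hemem : ∀ i, e i ∈ U := fun i => ((Finset.equivFinOfCardEq hUcard).symm i).2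
    have himg : Finset.image e univ = U := by
      apply Finset.eq_of_subset_of_card_le
      · intro x hx
        simp only [Finset.mem_image] at hx
        obtain ⟨i, _, rfl⟩ := hx
        exact hemem i
      · rw [hUcard, Finset.card_image_of_injective _ heinj, Finset.card_univ, Fintype.card_fin]
    have hprodU : (∏ i : Fin n, a (e i)) = ∏ x ∈ U, a x := by
      rw [← himg, Finset.prod_image (fun x _ y _ h => heinj h)]
    set b : Fin (n + 1) → R := Fin.snoc (fun i => a (e i)) (∏ x ∈ T \ U, a x) with hb
    have hprodb : (∏ i, b i) = ∏ x ∈ T, a x := by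
      rw [Fin.prod_univ_castSucc]
      simp only [hb, Fin.snoc_castSucc, Fin.snoc_last]
      rw [hprodU, mul_comm, Finset.prod_sdiff hUT]
    obtain ⟨j, hj⟩ := hI.2 b (by rw [hprodb]; exact hne) (by rw [hprodb]; exact hmem)
    rcases Fin.eq_castSucc_or_eq_last j with ⟨i, rfl⟩ | rfl
    · -- erased a singleton e i; get product over T.erase (e i) ∈ I, recurse
      have hset : (univ : Finset (Fin (n+1))).erase (Fin.castSucc i)
          = insert (Fin.last n) ((univ.erase i).image Fin.castSucc) := by
        ext x
        rcases Fin.eq_castSucc_or_eq_last x with ⟨y, rfl⟩ | rfl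
        · simp [Fin.castSucc_injective, (Fin.castSucc_lt_last y).ne,
            Fin.castSucc_inj]
        · simp [(Fin.castSucc_lt_last i).ne']
      have hlast : Fin.last n ∉ (univ.erase i).image Fin.castSucc := by
        simp [(Fin.castSucc_lt_last _).ne]
      have hprod_erase : (∏ x ∈ univ.erase (Fin.castSucc i), b x)
          = (∏ x ∈ T \ U, a x) * ∏ x ∈ U.erase (e i), a x := by
        rw [hset, Finset.prod_insert hlast,
          Finset.prod_image (fun x _ y _ h => Fin.castSucc_injective _ h)]
        simp only [hb, Fin.snoc_castSucc, Fin.snoc_last]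
        congr 1
        rw [← himg, ← Finset.image_erase heinj, Finset.prod_image (fun x _ y _ h => heinj h)]
      have hsplit : T.erase (e i) = (T \ U) ∪ U.erase (e i) := by
        ext x
        simp only [Finset.mem_erase, Finset.mem_union, Finset.mem_sdiff]
        constructor
        · rintro ⟨hx, hxT⟩
          by_cases hxU : x ∈ U
          · exact Or.inr ⟨hx, hxU⟩
          · exact Or.inl ⟨hxT, hxU⟩
        · rintro (⟨hxT, hxU⟩ | ⟨hx, hxU⟩)
          · exact ⟨fun h => hxU (h ▸ hemem i), hxT⟩
          · exact ⟨hx, hUT hxU⟩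
      have hdisj : Disjoint (T \ U) (U.erase (e i)) :=
        (Finset.sdiff_disjoint).mono_right (Finset.erase_subset _ _)
      have hmem' : (∏ x ∈ T.erase (e i), a x) ∈ I := by
        rw [hsplit, Finset.prod_union hdisj, ← hprod_erase]; exact hj
      have hne' : (∏ x ∈ T.erase (e i), a x) ≠ 0 := fun h0 => by
        rw [← Finset.mul_prod_erase T a (hUT (hemem i)), h0, mul_zero] at hne
        exact hne rfl
      have hsub : T.erase (e i) ⊂ T := Finset.erase_ssubset (hUT (hemem i))
      have hcard'' : n ≤ (T.erase (e i)).card := by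
        rw [Finset.card_erase_of_mem (hUT (hemem i))]
        omega
      obtain ⟨S, hS1, hS2, hS3⟩ := ih _ hsub hcard'' hne' hmem'
      exact ⟨S, hS1.trans (Finset.erase_subset _ _), hS2, hS3⟩
    · -- erased the big block: product over U ∈ I
      have hset : (univ : Finset (Fin (n+1))).erase (Fin.last n) = univ.image Fin.castSucc := by
        ext x
        rcases Fin.eq_castSucc_or_eq_last x with ⟨y, rfl⟩ | rfl
        · simp [(Fin.castSucc_lt_last y).ne]
        · simp [fun y => (Fin.castSucc_lt_last y).ne]
      have : (∏ x ∈ univ.erase (Fin.last n), b x) = ∏ x ∈ U, a x := by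
        rw [hset, Finset.prod_image (fun x _ y _ h => Fin.castSucc_injective _ h)]
        simp only [hb, Fin.snoc_castSucc]
        exact hprodU
      exact ⟨U, hUT, hUcard, by rwa [this] at hj⟩

theorem stmt2 {R : Type*} [CommRing R] [Nontrivial R] (k : ℕ) (hk : 0 < k)
    (I : Fin k → Ideal R) (n : Fin k → ℕ) (hn : ∀ i, 0 < n i)
    (h : ∀ i, WeaklyAbsorbing (n i) (I i)) :
    WeaklyAbsorbing (∑ i, n i) (⨅ i, I i) := by
  have i₀ : Fin k := ⟨0, hk⟩
  constructor
  · intro htop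
    exact (h i₀).1 (top_le_iff.mp (htop ▸ iInf_le I i₀))
  · intro a hne hmem
    rw [Ideal.mem_iInf] at hmem
    have key : ∀ i, ∃ S ⊆ (univ : Finset (Fin (∑ i, n i + 1))),
        S.card = n i ∧ (∏ x ∈ S, a x) ∈ I i := by
      intro i
      refine weakly_key (h i) a univ ?_ (by simpa using hne) (by simpa using hmem i)
      have : n i ≤ ∑ j, n j := Finset.single_le_sum (fun j _ => Nat.zero_le _) (mem_univ i)
      simp only [Finset.card_univ, Fintype.card_fin]
      omega
    choose S hS1 hS2 hS3 using key
    set B : Finset (Fin (∑ i, n i + 1)) := univ.biUnion S with hB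
    have hBcard : B.card < ∑ i, n i + 1 := by
      calc B.card ≤ ∑ i, (S i).card := Finset.card_biUnion_le
        _ = ∑ i, n i := by simp [hS2]
        _ < ∑ i, n i + 1 := Nat.lt_succ_self _
    have hBne : B ≠ univ := fun hBu => by
      rw [hBu, Finset.card_univ, Fintype.card_fin] at hBcard
      omega
    obtain ⟨j, _, hjB⟩ := Finset.exists_of_ssubset (lt_of_le_of_ne (Finset.subset_univ B) hBne)
    refine ⟨j, Ideal.mem_iInf.mpr fun i => ?_⟩
    have hsub : S i ⊆ univ.erase j := fun x hx =>
      Finset.mem_erase.mpr ⟨fun hxj => hjB (Finset.mem_biUnion.mpr ⟨i, mem_univ i, hxj ▸ hx⟩),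
        mem_univ x⟩
    rw [← Finset.prod_sdiff hsub]
    exact Ideal.mul_mem_left _ _ (hS3 i)
end

section
/- Let I be a proper ideal of a commutative ring R. Then I is strongly weakly n-absorbing if and only if for all ideals I₁,…,I_{n+1} of R with I ⊆ I₁ and 0 ≠ I₁⋯I_{n+1} ⊆ I, there are n of the I_i's whose product is contained in I. -/
open Finset Polynomial

theorem stmt3 {R : Type*} [CommRing R] [Nontrivial R] (n : ℕ) (hn : 0 < n)
    (I : Ideal R) (hI : I ≠ ⊤) :
    StronglyWeaklyAbsorbing n I ↔
      ∀ J : Fin (n + 1) → Ideal R, I ≤ J 0 → (∏ i, J i) ≠ ⊥ → (∏ i, J i) ≤ I →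
        ∃ j : Fin (n + 1), (∏ i ∈ univ.erase j, J i) ≤ I := by
  constructor
  · rintro ⟨-, h⟩ J _ hne hle
    exact h J hne hle
  · intro h
    refine ⟨hI, fun J hne hle => ?_⟩
    set J' : Fin (n + 1) → Ideal R := Function.update J 0 (J 0 ⊔ I) with hJ'def
    have hJ'0 : J' 0 = J 0 ⊔ I := Function.update_self _ _ _
    have heq : ∀ i : Fin (n + 1), i ≠ 0 → J' i = J i := fun i hi =>
      Function.update_of_ne hi _ _
    have hpt : ∀ i : Fin (n + 1), J i ≤ J' i := by
      intro i
      by_cases hi : i = 0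
      · subst hi; rw [hJ'0]; exact le_sup_left
      · rw [heq i hi]
    have hmono : ∀ s : Finset (Fin (n + 1)), (∏ i ∈ s, J i) ≤ ∏ i ∈ s, J' i := by
      intro s
      induction s using Finset.induction with
      | empty => simp
      | insert _ _ hx ih =>
        rw [Finset.prod_insert hx, Finset.prod_insert hx]
        exact Ideal.mul_mono (hpt _) ih
    have herase : (∏ i ∈ univ.erase (0 : Fin (n + 1)), J' i)
        = ∏ i ∈ univ.erase (0 : Fin (n + 1)), J i :=
      Finset.prod_congr rfl fun i hi => heq i (Finset.mem_erase.mp hi).1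
    have hsplit : (∏ i, J' i) = (J 0 ⊔ I) * ∏ i ∈ univ.erase (0 : Fin (n + 1)), J i := by
      rw [← Finset.mul_prod_erase univ J' (Finset.mem_univ 0), hJ'0, herase]
    have hsplitJ : (∏ i, J i) = J 0 * ∏ i ∈ univ.erase (0 : Fin (n + 1)), J i :=
      (Finset.mul_prod_erase univ J (Finset.mem_univ 0)).symm
    have hle' : (∏ i, J' i) ≤ I := by
      rw [hsplit, Ideal.sup_mul]
      apply sup_le
      · rw [← hsplitJ]; exact hle
      · exact Ideal.mul_le_left
    have hne' : (∏ i, J' i) ≠ ⊥ := by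
      intro hb
      exact hne (le_antisymm (hb ▸ hmono univ) bot_le)
    obtain ⟨j, hj⟩ := h J' (hJ'0 ▸ le_sup_right) hne' hle'
    refine ⟨j, ?_⟩
    by_cases hj0 : j = 0
    · subst hj0; rw [← herase]; exact hj
    · exact le_trans (hmono _) hj
end

section
/- Let R be a commutative ring, J a weakly n-absorbing ideal of R, and I an ideal of R with I ⊆ J. Then J/I is a weakly n-absorbing ideal of R/I. -/
open Finset Polynomial

theorem stmt4 {R : Type*} [CommRing R] (n : ℕ) (hn : 0 < n) (I J : Ideal R)
    (hIJ : I ≤ J) (h : WeaklyAbsorbing n J) :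
    WeaklyAbsorbing n (J.map (Ideal.Quotient.mk I)) := by
  have hsurj := Ideal.Quotient.mk_surjective (I := I)
  have hcomap : (J.map (Ideal.Quotient.mk I)).comap (Ideal.Quotient.mk I) = J := by
    rw [Ideal.comap_map_of_surjective _ hsurj, ← RingHom.ker_eq_comap_bot, Ideal.mk_ker, sup_eq_left.mpr hIJ]
  constructor
  · intro htop
    apply h.1
    rw [← hcomap, htop, Ideal.comap_top]
  · intro a hne hmem
    choose b hb using fun i => hsurj (a i)
    have hab : ∀ i, a i = Ideal.Quotient.mk I (b i) := fun i => (hb i).symm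
    have hprod : Ideal.Quotient.mk I (∏ i, b i) = ∏ i, a i := by
      rw [map_prod]; exact Finset.prod_congr rfl fun i _ => hb i
    have hbJ : (∏ i, b i) ∈ J := by
      rw [← hcomap, Ideal.mem_comap, hprod]; exact hmem
    have hbne : (∏ i, b i) ≠ 0 := fun h0 => hne (by rw [← hprod, h0, map_zero])
    obtain ⟨j, hj⟩ := h.2 b hbne hbJ
    refine ⟨j, ?_⟩
    have : Ideal.Quotient.mk I (∏ i ∈ univ.erase j, b i) = ∏ i ∈ univ.erase j, a i := by
      rw [map_prod]; exact Finset.prod_congr rfl fun i _ => hb i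
    rw [← this]
    exact Ideal.mem_map_of_mem _ hj
end

section
/- Let R be a commutative ring, J a weakly n-absorbing ideal of R, and S a multiplicatively closed subset of R with J ∩ S = ∅. Then the extension J_S of J to the localization R_S is a weakly n-absorbing ideal of R_S. -/
open Finset Polynomial

theorem stmt5 {R : Type*} [CommRing R] (n : ℕ) (hn : 0 < n) (J : Ideal R)
    (S : Submonoid R) (hS : ∀ s ∈ S, s ∉ J)
    (A : Type*) [CommRing A] [Algebra R A] [IsLocalization S A]
    (h : WeaklyAbsorbing n J) :
    WeaklyAbsorbing n (J.map (algebraMap R A)) := by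
  obtain ⟨hJ, habs⟩ := h
  constructor
  · intro htop
    have h1 : (1 : A) ∈ J.map (algebraMap R A) := htop ▸ Submodule.mem_top
    rw [IsLocalization.mem_map_algebraMap_iff S A] at h1
    obtain ⟨⟨x, s⟩, hx⟩ := h1
    rw [one_mul] at hx
    obtain ⟨t, ht⟩ := (IsLocalization.eq_iff_exists S A).mp hx
    exact hS (↑t * ↑s) (mul_mem t.2 s.2) (ht ▸ J.mul_mem_left ↑t x.2)
  · intro a hne hmem
    choose p hrs' using fun i => IsLocalization.surj S (a i)
    set r : Fin (n+1) → R := fun i => (p i).1 with hr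
    set s : Fin (n+1) → S := fun i => (p i).2 with hsdef
    have hrs : ∀ i, a i * algebraMap R A ↑(s i) = algebraMap R A (r i) := hrs'
    rw [IsLocalization.mem_map_algebraMap_iff S A] at hmem
    obtain ⟨⟨x, u⟩, hxu⟩ := hmem
    dsimp only at hxu
    have hfr : ∀ (F : Finset (Fin (n+1))), algebraMap R A (∏ i ∈ F, r i)
        = (∏ i ∈ F, a i) * algebraMap R A (∏ i ∈ F, (s i : R)) := by
      intro F
      rw [map_prod, map_prod, ← Finset.prod_mul_distrib]
      exact Finset.prod_congr rfl fun i _ => (hrs i).symm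
    have hSunit : ∀ (F : Finset (Fin (n+1))),
        IsUnit (algebraMap R A (∏ i ∈ F, (s i : R))) := fun F =>
      IsLocalization.map_units A ⟨∏ i ∈ F, (s i : R), S.prod_mem fun i _ => (s i).2⟩
    have key : algebraMap R A ((∏ i, (s i : R)) * ↑x)
        = algebraMap R A (↑u * ∏ i, r i) := by
      rw [map_mul, map_mul, ← hxu, hfr, map_prod]
      ring
    obtain ⟨t, ht⟩ := (IsLocalization.eq_iff_exists S A).mp key
    set c : Fin (n+1) → R := Function.update r 0 (↑t * ↑u * r 0) with hc
    have hprodc : ∏ i, c i = ↑t * ↑u * ∏ i, r i := by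
      rw [hc, Finset.prod_update_of_mem (Finset.mem_univ 0),
        Finset.sdiff_singleton_eq_erase, mul_assoc,
        Finset.mul_prod_erase univ r (Finset.mem_univ 0)]
    have hcJ : (∏ i, c i) ∈ J := by
      rw [hprodc, mul_assoc, ← ht]
      exact J.mul_mem_left _ (J.mul_mem_left _ x.2)
    have hcne : (∏ i, c i) ≠ 0 := by
      intro h0
      have h00 : algebraMap R A (∏ i, c i) = 0 := by rw [h0, map_zero]
      rw [hprodc, map_mul, map_mul, hfr] at h00
      have h1 : (∏ i, a i) * (algebraMap R A ↑t * algebraMap R A ↑u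
          * algebraMap R A (∏ i, (s i : R))) = 0 := by rw [← h00]; ring
      exact hne (((((IsLocalization.map_units A t).mul
        (IsLocalization.map_units A u)).mul (hSunit univ)).mul_left_eq_zero).mp h1)
    obtain ⟨j, hj⟩ := habs c hcne hcJ
    have hkey : (↑t * ↑u * ∏ i ∈ univ.erase j, r i) ∈ J := by
      by_cases hj0 : j = 0
      · subst hj0
        refine J.mul_mem_left _ ?_
        have heq : ∏ i ∈ univ.erase (0 : Fin (n+1)), c i = ∏ i ∈ univ.erase 0, r i :=
          Finset.prod_congr rfl fun i hi =>
            Function.update_of_ne (Finset.ne_of_mem_erase hi) _ _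
        rwa [heq] at hj
      · have h0mem : (0 : Fin (n+1)) ∈ univ.erase j :=
          Finset.mem_erase.mpr ⟨Ne.symm hj0, Finset.mem_univ 0⟩
        have hsplit : ∏ i ∈ univ.erase j, c i
            = c 0 * ∏ i ∈ (univ.erase j).erase 0, c i :=
          (Finset.mul_prod_erase _ c h0mem).symm
        have h2 : ∏ i ∈ (univ.erase j).erase 0, c i
            = ∏ i ∈ (univ.erase j).erase 0, r i :=
          Finset.prod_congr rfl fun i hi =>
            Function.update_of_ne (Finset.ne_of_mem_erase hi) _ _
        have h3 : r 0 * ∏ i ∈ (univ.erase j).erase 0, r i = ∏ i ∈ univ.erase j, r i :=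
          Finset.mul_prod_erase _ r h0mem
        rw [hsplit, h2] at hj
        have h4 : ↑t * ↑u * ∏ i ∈ univ.erase j, r i
            = c 0 * ∏ i ∈ (univ.erase j).erase 0, r i := by
          rw [hc, Function.update_self, ← h3]; ring
        rwa [h4]
    refine ⟨j, ?_⟩
    have hmap : algebraMap R A (↑t * ↑u * ∏ i ∈ univ.erase j, r i)
        ∈ J.map (algebraMap R A) := Ideal.mem_map_of_mem _ hkey
    rw [map_mul, map_mul, mul_assoc,
      Ideal.unit_mul_mem_iff_mem _ (IsLocalization.map_units A t),
      Ideal.unit_mul_mem_iff_mem _ (IsLocalization.map_units A u), hfr,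
      Ideal.mul_unit_mem_iff_mem _ (hSunit (univ.erase j))] at hmap
    exact hmap
end

section
/- Let I ⊆ J be proper ideals of a commutative ring R. If I is a weakly n-absorbing ideal of R and J/I is a weakly n-absorbing ideal of R/I, then J is a weakly n-absorbing ideal of R. -/
open Finset Polynomial

theorem stmt6 {R : Type*} [CommRing R] (n : ℕ) (hn : 0 < n) (I J : Ideal R)
    (hIJ : I ≤ J) (hJ : J ≠ ⊤) (hI : WeaklyAbsorbing n I)
    (hQ : WeaklyAbsorbing n (J.map (Ideal.Quotient.mk I))) :
    WeaklyAbsorbing n J := by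
  refine ⟨hJ, fun a hne hmem => ?_⟩
  by_cases h0 : (∏ i, (Ideal.Quotient.mk I) (a i)) = 0
  · rw [← map_prod, Ideal.Quotient.eq_zero_iff_mem] at h0
    obtain ⟨j, hj⟩ := hI.2 a hne h0
    exact ⟨j, hIJ hj⟩
  · obtain ⟨j, hj⟩ := hQ.2 (fun i => Ideal.Quotient.mk I (a i)) h0
      (by rw [← map_prod]; exact Ideal.mem_map_of_mem _ hmem)
    rw [← map_prod, Ideal.mem_quotient_iff_mem hIJ] at hj
    exact ⟨j, hj⟩
end

section
/- Let I be an ideal of an integral domain R. Then the ideal ⟨I, X⟩ of R[X] generated by I and X is a weakly n-absorbing ideal of R[X] if and only if I is a weakly n-absorbing ideal of R. -/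
open Finset Polynomial

lemma mem_sup_X {R : Type*} [CommRing R] (I : Ideal R) (f : Polynomial R) :
    f ∈ I.map (Polynomial.C : R →+* Polynomial R) ⊔ Ideal.span {Polynomial.X} ↔
      f.coeff 0 ∈ I := by
  constructor
  · intro hf
    have h : I.map (Polynomial.C : R →+* Polynomial R) ⊔ Ideal.span {Polynomial.X} ≤
        I.comap (Polynomial.constantCoeff : Polynomial R →+* R) := by
      refine sup_le ?_ ?_
      · rw [Ideal.map_le_iff_le_comap]
        intro x hx
        simpa [Ideal.mem_comap] using hx
      · rw [Ideal.span_le]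
        intro x hx
        simp only [Set.mem_singleton_iff] at hx
        subst hx
        simp [Ideal.mem_comap, SetLike.mem_coe]
    simpa [Ideal.mem_comap, Polynomial.constantCoeff_apply] using h hf
  · intro hf
    rw [← Polynomial.X_mul_divX_add f]
    exact Ideal.add_mem _
      (Ideal.mul_mem_right _ _ (Ideal.mem_sup_right (Ideal.subset_span rfl)))
      (Ideal.mem_sup_left (Ideal.mem_map_of_mem _ hf))

theorem stmt7 {R : Type*} [CommRing R] [IsDomain R] (n : ℕ) (hn : 0 < n)
    (I : Ideal R) :
    WeaklyAbsorbing n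
        (I.map (Polynomial.C : R →+* Polynomial R) ⊔ Ideal.span {Polynomial.X}) ↔
      WeaklyAbsorbing n I := by
  constructor
  · rintro ⟨hJt, hJabs⟩
    refine ⟨?_, ?_⟩
    · intro hI
      apply hJt
      rw [Ideal.eq_top_iff_one] at hI ⊢
      rw [mem_sup_X]
      simpa using hI
    · intro a ha haI
      have hCp : ∀ s : Finset (Fin (n+1)), (∏ i ∈ s, Polynomial.C (a i)) =
          Polynomial.C (∏ i ∈ s, a i) := fun s =>
        (map_prod (Polynomial.C : R →+* Polynomial R) a s).symm
      obtain ⟨j, hj⟩ := hJabs (fun i => Polynomial.C (a i))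
        (by rw [hCp]; simpa only [ne_eq, Polynomial.C_eq_zero] using ha)
        (by rw [hCp, mem_sup_X, Polynomial.coeff_C_zero]; exact haI)
      refine ⟨j, ?_⟩
      rw [hCp] at hj; rwa [mem_sup_X, Polynomial.coeff_C_zero] at hj
  · rintro ⟨hI, habs⟩
    refine ⟨?_, ?_⟩
    · intro hJt
      apply hI
      rw [Ideal.eq_top_iff_one] at hJt ⊢
      rw [mem_sup_X] at hJt
      simpa using hJt
    · intro f hf hfJ
      have hcoeff : (∏ i, f i).coeff 0 = ∏ i, (f i).coeff 0 := by
        rw [← Polynomial.constantCoeff_apply, map_prod]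
        simp [Polynomial.constantCoeff_apply]
      by_cases h0 : (∏ i, (f i).coeff 0) = 0
      · obtain ⟨j, -, hj0⟩ := Finset.prod_eq_zero_iff.mp h0
        have hne : ∃ k : Fin (n + 1), k ≠ j := by
          haveI : Nontrivial (Fin (n + 1)) := ⟨⟨⟨0, by omega⟩, ⟨1, by omega⟩, by
            simp [Fin.ext_iff]⟩⟩
          exact exists_ne j
        obtain ⟨k, hk⟩ := hne
        refine ⟨k, ?_⟩
        rw [mem_sup_X]
        have hz : (∏ i ∈ univ.erase k, f i).coeff 0 = 0 := by
          rw [← Polynomial.constantCoeff_apply, map_prod]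
          exact Finset.prod_eq_zero (Finset.mem_erase.mpr ⟨(Ne.symm hk), mem_univ j⟩)
            (by simpa [Polynomial.constantCoeff_apply] using hj0)
        rw [hz]
        exact I.zero_mem
      · obtain ⟨j, hj⟩ := habs (fun i => (f i).coeff 0) h0
          (by rw [← hcoeff, ← mem_sup_X]; exact hfJ)
        refine ⟨j, ?_⟩
        rw [mem_sup_X, ← Polynomial.constantCoeff_apply, map_prod]
        simpa [Polynomial.constantCoeff_apply] using hj
end

section
/- Let I be a weakly primary ideal of a commutative ring R, and suppose that (√I)ⁿ ⊆ I for some positive integer n. Then I is a weakly n-absorbing ideal of R. -/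
open Finset Polynomial

theorem prod_mem_pow_card' {R : Type*} [CommRing R] (J : Ideal R) {ι : Type*}
    (s : Finset ι) (f : ι → R) (h : ∀ i ∈ s, f i ∈ J) : ∏ i ∈ s, f i ∈ J ^ s.card := by
  induction s using Finset.cons_induction with
  | empty => simp
  | cons a s ha ih =>
    rw [Finset.prod_cons, Finset.card_cons, pow_succ']
    exact Ideal.mul_mem_mul (h a (Finset.mem_cons_self _ _))
      (ih fun i hi => h i (Finset.mem_cons_of_mem hi))

theorem stmt8 {R : Type*} [CommRing R] (n : ℕ) (hn : 0 < n) (I : Ideal R)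
    (hprim : WeaklyPrimary I) (hrad : I.radical ^ n ≤ I) :
    WeaklyAbsorbing n I := by
  obtain ⟨hI, hP⟩ := hprim
  refine ⟨hI, fun a hne hmem => ?_⟩
  by_contra h
  push_neg at h
  have hall : ∀ j, a j ∈ I.radical := by
    intro j
    have heq : (∏ i ∈ univ.erase j, a i) * a j = ∏ i, a i := by
      rw [mul_comm, Finset.mul_prod_erase _ _ (Finset.mem_univ j)]
    have := hP (∏ i ∈ univ.erase j, a i) (a j) (by rw [heq]; exact hne)
      (by rw [heq]; exact hmem)
    exact this.resolve_left (h j)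
  refine h 0 (hrad ?_)
  have hcard : (univ.erase (0 : Fin (n + 1))).card = n := by
    simp [Finset.card_erase_of_mem]
  have := prod_mem_pow_card' I.radical (univ.erase (0 : Fin (n + 1))) a (fun i _ => hall i)
  rwa [hcard] at this
end

section
/- Let R be a commutative ring whose zero ideal is an n-absorbing ideal (e.g., an integral domain). Then every weakly n-absorbing ideal of R is an n-absorbing ideal of R. -/
open Finset Polynomial

theorem stmt9 {R : Type*} [CommRing R] (n : ℕ) (hn : 0 < n)
    (h0 : Absorbing n (⊥ : Ideal R)) (I : Ideal R) (hI : WeaklyAbsorbing n I) :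
    Absorbing n I := by
  refine ⟨hI.1, fun a ha => ?_⟩
  by_cases h : (∏ i, a i) = 0
  · obtain ⟨j, hj⟩ := h0.2 a (by simp [h])
    exact ⟨j, by simpa using hj ▸ I.zero_mem⟩
  · exact hI.2 a h ha
end

section
/- Let P be a divided weakly prime ideal of a commutative ring R, and let I be a weakly n-absorbing ideal of R with √I = P. Then I is a weakly primary ideal of R. -/
open Finset Polynomial

theorem stmt10 {R : Type*} [CommRing R] (n : ℕ) (hn : 0 < n) (P I : Ideal R)
    (hP : P ≠ ⊤) (hwp : ∀ a b : R, a * b ≠ 0 → a * b ∈ P → a ∈ P ∨ b ∈ P)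
    (hdiv : ∀ x : R, x ∉ P → P < Ideal.span {x})
    (hI : WeaklyAbsorbing n I) (hrad : I.radical = P) :
    WeaklyPrimary I := by
  obtain ⟨hItop, habs⟩ := hI
  refine ⟨hItop, fun a b hab0 habI => ?_⟩
  by_cases hbP : b ∈ P
  · right; rw [hrad]; exact hbP
  left
  have hIP : I ≤ P := hrad ▸ Ideal.le_radical
  have haP : a ∈ P := by
    rcases hwp a b hab0 (hIP habI) with h | h
    · exact h
    · exact absurd h hbP
  have hbn : b ^ n ∉ P := by
    intro h
    apply hbP
    rw [← hrad] at h ⊢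
    obtain ⟨m, hm⟩ := h
    rw [← pow_mul] at hm
    exact ⟨n * m, hm⟩
  obtain ⟨c, hc⟩ := Ideal.mem_span_singleton'.mp ((hdiv (b ^ n) hbn).le haP)
  set f : Fin (n + 1) → R := fun i => if i = 0 then c * b else b with hf
  have hprod : (∏ i, f i) = a * b := by
    rw [Fin.prod_univ_succ]
    have h1 : f 0 = c * b := if_pos rfl
    have h2 : ∀ i : Fin n, f i.succ = b := fun i => if_neg (Fin.succ_ne_zero i)
    rw [h1, Finset.prod_congr rfl fun i _ => h2 i, Finset.prod_const, Finset.card_univ,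
      Fintype.card_fin, ← hc]
    ring
  obtain ⟨j, hj⟩ := habs f (hprod ▸ hab0) (hprod ▸ habI)
  by_cases hj0 : j = 0
  · exfalso
    apply hbn
    apply hIP
    have heq : (∏ i ∈ univ.erase j, f i) = b ^ n := by
      rw [Finset.prod_congr rfl fun i hi =>
        if_neg (hj0 ▸ Finset.ne_of_mem_erase hi), Finset.prod_const,
        Finset.card_erase_of_mem (mem_univ _), card_univ, Fintype.card_fin, Nat.add_sub_cancel]
    rwa [heq] at hj
  · have h0 : (0 : Fin (n + 1)) ∈ univ.erase j :=
      Finset.mem_erase.mpr ⟨Ne.symm hj0, mem_univ _⟩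
    have heq : (∏ i ∈ univ.erase j, f i) = a := by
      rw [← Finset.mul_prod_erase _ f h0]
      have hall : ∀ i ∈ (univ.erase j).erase 0, f i = b :=
        fun i hi => if_neg (Finset.ne_of_mem_erase hi)
      rw [Finset.prod_congr rfl hall, Finset.prod_const]
      have hcard : ((univ.erase j).erase 0).card = n - 1 := by
        rw [Finset.card_erase_of_mem h0, Finset.card_erase_of_mem (mem_univ _),
          card_univ, Fintype.card_fin]
        omega
      have h1 : f 0 = c * b := if_pos rfl
      have hbb : b * b ^ (n - 1) = b ^ n := by
        rw [← pow_succ']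
        congr 1
        omega
      rw [hcard, h1, mul_assoc, hbb, ← hc]
    rwa [heq] at hj
end

section
/- Let I be a weakly n-absorbing ideal of a commutative ring R and suppose (a₁,…,a_{n+1}) is an (n+1)-tuple-zero of I. Then for every choice of indices 1 ≤ α₁ < α₂ < ⋯ < α_m ≤ n+1 with 1 ≤ m ≤ n, the product of the remaining a_i's (those with index outside {α₁,…,α_m}) times Iᵐ is zero, i.e., (∏_{i ∉ {α₁,…,α_m}} a_i) · Iᵐ = {0}. -/
open Finset Polynomial

/-- Key lemma: the product of the `a i` outside `s` annihilates any product of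
elements of `I` indexed by `s`. -/
lemma key_absorb {R : Type*} [CommRing R] {n : ℕ} {I : Ideal R}
    (hI : WeaklyAbsorbing n I) {a : Fin (n + 1) → R}
    (hzero : ∏ i, a i = 0)
    (hnot : ∀ j : Fin (n + 1), (∏ i ∈ univ.erase j, a i) ∉ I) :
    ∀ m : ℕ, ∀ s : Finset (Fin (n + 1)), s.card = m → s.Nonempty → s.card ≤ n →
      ∀ x : Fin (n + 1) → R, (∀ i, x i ∈ I) →
        (∏ i ∈ sᶜ, a i) * ∏ i ∈ s, x i = 0 := by
  intro m
  induction m using Nat.strong_induction_on with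
  | _ m IH =>
    intro s hcard hne hle x hx
    by_contra h
    set c : R := ∏ i ∈ sᶜ, a i with hc
    set X : R := ∏ i ∈ s, x i with hX
    set g : Fin (n + 1) → R := fun i => if i ∈ s then x i else 0 with hg
    have hgI : ∀ i, g i ∈ I := by
      intro i
      simp only [hg]
      split
      · exact hx i
      · exact I.zero_mem
    set b : Fin (n + 1) → R := fun i => a i + g i with hb
    -- Step A : the full product of b equals c * X
    have hbprod : ∏ i, b i = c * X := by
      rw [← Finset.prod_compl_mul_prod s b]
      have h2 : ∏ i ∈ sᶜ, b i = c := by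
        refine Finset.prod_congr rfl fun i hi => ?_
        have : i ∉ s := Finset.mem_compl.mp hi
        simp [hb, hg, this]
      have h3 : ∏ i ∈ s, b i = ∑ T ∈ s.powerset, (∏ i ∈ T, a i) * ∏ i ∈ s \ T, x i := by
        have : ∏ i ∈ s, b i = ∏ i ∈ s, (a i + x i) := by
          refine Finset.prod_congr rfl fun i hi => ?_
          simp [hb, hg, hi]
        rw [this, Finset.prod_add]
      rw [h2, h3, Finset.mul_sum]
      have hterm : ∀ T ∈ s.powerset,
          c * ((∏ i ∈ T, a i) * ∏ i ∈ s \ T, x i) = if T = ∅ then c * X else 0 := by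
        intro T hT
        have hTs : T ⊆ s := Finset.mem_powerset.mp hT
        by_cases hT0 : T = ∅
        · simp [hT0, hX]
        · simp only [hT0, if_false]
          by_cases hTs' : T = s
          · subst hTs'
            have : c * ∏ i ∈ T, a i = ∏ i, a i := Finset.prod_compl_mul_prod T a
            rw [Finset.sdiff_self, Finset.prod_empty, mul_one, this, hzero]
          · -- proper nonempty subset : use induction hypothesis on s \ T
            have hU : (s \ T).Nonempty :=
              Finset.sdiff_nonempty.mpr fun hsub => hTs' (Finset.Subset.antisymm hTs hsub)
            have hTne : T.Nonempty := Finset.nonempty_iff_ne_empty.mpr hT0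
            have hUcard : (s \ T).card < m := by
              rw [Finset.card_sdiff_of_subset hTs, ← hcard]
              have h1 : 1 ≤ T.card := Finset.card_pos.mpr hTne
              have h2 : T.card ≤ s.card := Finset.card_le_card hTs
              omega
            have hUle : (s \ T).card ≤ n :=
              le_trans (Finset.card_le_card (Finset.sdiff_subset)) (hcard ▸ hcard ▸ hle)
            have hIH := IH (s \ T).card hUcard (s \ T) rfl hU hUle x hx
            have hcompl : (s \ T)ᶜ = sᶜ ∪ T := by
              ext i
              simp only [Finset.mem_compl, Finset.mem_sdiff, Finset.mem_union]
              by_cases his : i ∈ s <;> by_cases hiT : i ∈ T <;> simp [his, hiT]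
            have hdisj : Disjoint sᶜ T := by
              rw [Finset.disjoint_left]
              intro i hi hiT
              exact (Finset.mem_compl.mp hi) (hTs hiT)
            rw [hcompl, Finset.prod_union hdisj] at hIH
            rw [← mul_assoc]
            exact hIH
      rw [Finset.sum_congr rfl hterm]
      simp
    have hXI : X ∈ I := by
      obtain ⟨i0, hi0⟩ := hne
      rw [hX, ← Finset.mul_prod_erase s x hi0]
      exact I.mul_mem_right _ (hx i0)
    have hmem : ∏ i, b i ∈ I := by
      rw [hbprod]; exact I.mul_mem_left c hXI
    have hne0 : ∏ i, b i ≠ 0 := by rw [hbprod]; exact h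
    obtain ⟨k, hk⟩ := hI.2 b hne0 hmem
    -- Step D : deduce ∏ a over erase k lies in I, contradiction
    apply hnot k
    set E : Finset (Fin (n + 1)) := univ.erase k with hE
    have hexp : ∏ i ∈ E, b i = ∑ T ∈ E.powerset, (∏ i ∈ T, a i) * ∏ i ∈ E \ T, g i :=
      Finset.prod_add a g E
    rw [← Finset.sum_erase_add _ _ (Finset.mem_powerset_self E)] at hexp
    have hsumI : ∑ T ∈ E.powerset.erase E, (∏ i ∈ T, a i) * ∏ i ∈ E \ T, g i ∈ I := by
      refine Ideal.sum_mem _ fun T hT => ?_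
      have hTE : T ⊆ E := Finset.mem_powerset.mp (Finset.mem_of_mem_erase hT)
      have hTne : T ≠ E := Finset.ne_of_mem_erase hT
      have hU : (E \ T).Nonempty :=
        Finset.sdiff_nonempty.mpr fun hsub => hTne (Finset.Subset.antisymm hTE hsub)
      obtain ⟨j, hj⟩ := hU
      refine I.mul_mem_left _ ?_
      rw [← Finset.mul_prod_erase _ g hj]
      exact I.mul_mem_right _ (hgI j)
    rw [Finset.sdiff_self, Finset.prod_empty, mul_one] at hexp
    have : ∏ i ∈ E, a i = ∏ i ∈ E, b i - ∑ T ∈ E.powerset.erase E, (∏ i ∈ T, a i) * ∏ i ∈ E \ T, g i := by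
      rw [hexp]; ring
    rw [this]
    exact I.sub_mem hk hsumI

/-- `I ^ s.card` is contained in the span of products of elements of `I` indexed by `s`. -/
lemma pow_le_span_prod {R : Type*} [CommRing R] (I : Ideal R) {ι : Type*} [DecidableEq ι]
    (s : Finset ι) (hs : s.Nonempty) :
    I ^ s.card ≤ Ideal.span {z | ∃ x : ι → R, (∀ i, x i ∈ I) ∧ z = ∏ i ∈ s, x i} := by
  induction s using Finset.cons_induction with
  | empty => exact absurd hs (by simp)
  | cons i s' hi IH =>
    by_cases hs' : s'.Nonempty
    · rw [Finset.card_cons, pow_succ]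
      rw [Submodule.mul_le]
      intro z hz w hw
      have hz' := IH hs' hz
      refine Submodule.span_induction
        (p := fun z _ => z * w ∈ Ideal.span {z | ∃ x : ι → R, (∀ i, x i ∈ I) ∧ z = ∏ i ∈ cons i s' hi, x i})
        ?_ ?_ ?_ ?_ hz'
      · rintro z ⟨x, hxI, rfl⟩
        apply Ideal.subset_span
        refine ⟨Function.update x i w, ?_, ?_⟩
        · intro j
          rcases eq_or_ne j i with rfl | hji
          · simpa using hw
          · simpa [Function.update_of_ne hji] using hxI j
        · rw [Finset.prod_cons, Function.update_self, mul_comm]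
          congr 1
          refine Finset.prod_congr rfl fun j hj => ?_
          have : j ≠ i := fun hji => hi (hji ▸ hj)
          rw [Function.update_of_ne this]
      · simp
      · intro u v _ _ hu hv
        rw [add_mul]; exact Ideal.add_mem _ hu hv
      · intro r u _ hu
        rw [smul_eq_mul, mul_assoc]
        exact Ideal.mul_mem_left _ r hu
    · have : s' = ∅ := Finset.not_nonempty_iff_eq_empty.mp hs'
      subst this
      intro y hy
      simp only [Finset.card_cons, Finset.card_empty, zero_add, pow_one] at hy
      apply Ideal.subset_span
      refine ⟨fun j => if j = i then y else 0, ?_, ?_⟩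
      · intro j
        by_cases hji : j = i
        · simpa [hji] using hy
        · simp [hji]
      · simp

theorem stmt11 {R : Type*} [CommRing R] (n : ℕ) (hn : 0 < n) (I : Ideal R)
    (hI : WeaklyAbsorbing n I) (a : Fin (n + 1) → R)
    (hzero : ∏ i, a i = 0)
    (hnot : ∀ j : Fin (n + 1), (∏ i ∈ univ.erase j, a i) ∉ I) :
    ∀ s : Finset (Fin (n + 1)), 1 ≤ s.card → s.card ≤ n →
      ∀ y ∈ I ^ s.card, (∏ i ∈ sᶜ, a i) * y = 0 := by
  intro s h1 h2 y hy
  have hs : s.Nonempty := Finset.card_pos.mp h1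
  have hy' := pow_le_span_prod I s hs hy
  refine Submodule.span_induction
    (p := fun y _ => (∏ i ∈ sᶜ, a i) * y = 0) ?_ ?_ ?_ ?_ hy'
  · rintro z ⟨x, hxI, rfl⟩
    exact key_absorb hI hzero hnot s.card s rfl hs h2 x hxI
  · simp
  · intro u v _ _ hu hv
    rw [mul_add, hu, hv, add_zero]
  · intro r u _ hu
    rw [smul_eq_mul, mul_left_comm, hu, mul_zero]
end

section
/- Let I be a weakly n-absorbing ideal of a commutative ring R that is not an n-absorbing ideal. Then I^{n+1} = {0}. -/
open Finset Polynomial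

private lemma pow_le_bot_aux {R : Type*} [CommRing R] (I : Ideal R) :
    ∀ (m : ℕ) (c : R), (∀ x : Fin m → R, (∀ i, x i ∈ I) → c * ∏ i, x i = 0) →
      ∀ y ∈ I ^ m, c * y = 0 := by
  intro m
  induction m with
  | zero =>
    intro c hc y _
    have hc0 : c = 0 := by simpa using hc (fun i => i.elim0) (fun i => i.elim0)
    simp [hc0]
  | succ m ih =>
    intro c hc y hy
    rw [pow_succ] at hy
    refine Submodule.mul_induction_on hy ?_ ?_
    · intro p hp q hq
      have h1 : ∀ x : Fin m → R, (∀ i, x i ∈ I) → (c * q) * ∏ i, x i = 0 := by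
        intro x hx
        have := hc (Fin.cons q x) (by
          intro i
          refine Fin.cases ?_ ?_ i
          · simpa using hq
          · intro j; simpa using hx j)
        simpa [Fin.prod_cons, mul_assoc, mul_comm, mul_left_comm] using this
      have := ih (c * q) h1 p hp
      calc c * (p * q) = (c * q) * p := by ring
        _ = 0 := this
    · intro y1 y2 h1 h2
      rw [mul_add, h1, h2, add_zero]

theorem stmt12 {R : Type*} [CommRing R] (n : ℕ) (hn : 0 < n) (I : Ideal R)
    (hI : WeaklyAbsorbing n I) (hna : ¬ Absorbing n I) :
    I ^ (n + 1) = ⊥ := by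
  obtain ⟨hItop, hW⟩ := hI
  have hB : ¬ ∀ a : Fin (n + 1) → R, (∏ i, a i) ∈ I →
      ∃ j : Fin (n + 1), (∏ i ∈ univ.erase j, a i) ∈ I := fun h => hna ⟨hItop, h⟩
  push_neg at hB
  obtain ⟨a, haI, hno⟩ := hB
  have ha0 : ∏ i, a i = 0 := by
    by_contra h
    obtain ⟨j, hj⟩ := hW a h haI
    exact hno j hj
  -- key claim
  have key : ∀ S : Finset (Fin (n + 1)), ∀ x : Fin (n + 1) → R, (∀ i, x i ∈ I) →
      (∏ i ∈ S, x i) * ∏ i ∈ univ \ S, a i = 0 := by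
    intro S
    induction S using Finset.strongInduction with
    | _ S ih =>
      intro x hx
      rcases S.eq_empty_or_nonempty with rfl | ⟨i0, hi0⟩
      · simpa using ha0
      set d : Fin (n + 1) → R := fun i => if i ∈ S then x i else 0 with hd
      have hdI : ∀ i, d i ∈ I := by
        intro i
        by_cases h : i ∈ S <;> simp [hd, h, hx i, I.zero_mem]
      have expand : ∀ U : Finset (Fin (n + 1)),
          ∏ i ∈ U, (a i + d i) = ∑ t ∈ U.powerset, (∏ i ∈ t, d i) * ∏ i ∈ U \ t, a i := by
        intro U
        rw [Finset.prod_congr rfl (fun i _ => add_comm (a i) (d i)), Finset.prod_add]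
      set p : R := (∏ i ∈ S, x i) * ∏ i ∈ univ \ S, a i with hp
      have hb : ∏ i, (a i + d i) = p := by
        rw [expand univ]
        rw [Finset.sum_eq_single_of_mem S (Finset.mem_powerset.2 (Finset.subset_univ S))]
        · rw [hp]
          congr 1
          exact Finset.prod_congr rfl (fun i hi => if_pos hi)
        · intro t ht hne
          by_cases hts : t ⊆ S
          · exact ih t (HasSubset.Subset.ssubset_of_ne hts hne) d hdI
          · obtain ⟨i, hit, hiS⟩ := Finset.not_subset.1 hts
            rw [Finset.prod_eq_zero hit (by simp [hd, hiS]), zero_mul]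
      by_contra hpne
      have hpI : p ∈ I := by
        rw [hp, ← Finset.mul_prod_erase S x hi0, mul_assoc]
        exact Ideal.mul_mem_right _ I (hx i0)
      obtain ⟨j, hj⟩ := hW (fun i => a i + d i) (by rw [hb]; exact hpne) (by rw [hb]; exact hpI)
      rw [expand (univ.erase j)] at hj
      have hmem0 : (∅ : Finset (Fin (n + 1))) ∈ (univ.erase j).powerset :=
        Finset.mem_powerset.2 (Finset.empty_subset _)
      rw [← Finset.add_sum_erase _ _ hmem0] at hj
      have hrest : (∑ t ∈ ((univ.erase j).powerset.erase ∅),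
          (∏ i ∈ t, d i) * ∏ i ∈ (univ.erase j) \ t, a i) ∈ I := by
        refine Ideal.sum_mem _ (fun t ht => ?_)
        have htne : t.Nonempty := Finset.nonempty_of_ne_empty (Finset.ne_of_mem_erase ht)
        obtain ⟨i, hit⟩ := htne
        rw [← Finset.mul_prod_erase t d hit, mul_assoc]
        exact Ideal.mul_mem_right _ I (hdI i)
      have : (∏ i ∈ univ.erase j, a i) ∈ I := by
        have h2 : (∏ i ∈ (∅ : Finset (Fin (n+1))), d i) * ∏ i ∈ (univ.erase j) \ ∅, a i ∈ I := by
          have := I.sub_mem hj hrest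
          simpa using this
        simpa using h2
      exact hno j this
  have H : ∀ x : Fin (n + 1) → R, (∀ i, x i ∈ I) → (1 : R) * ∏ i, x i = 0 := by
    intro x hx
    have := key univ x hx
    simpa using this
  rw [eq_bot_iff]
  intro y hy
  rw [Ideal.mem_bot]
  have := pow_le_bot_aux I (n + 1) 1 H y hy
  simpa using this
end

section
/- Let I be a weakly n-absorbing ideal of a commutative ring R that is not an n-absorbing ideal. Then √I = Nil(R), the nilradical of R. -/
open Finset Polynomial

theorem stmt13 {R : Type*} [CommRing R] (n : ℕ) (hn : 0 < n) (I : Ideal R)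
    (hI : WeaklyAbsorbing n I) (hna : ¬ Absorbing n I) :
    I.radical = nilradical R := by
  obtain ⟨hItop, hweak⟩ := hI
  rw [Absorbing] at hna
  push_neg at hna
  obtain ⟨x, hxI, hxe⟩ := hna hItop
  have hx0 : (∏ i, x i) = 0 := by
    by_contra h
    obtain ⟨j, hj⟩ := hweak x h hxI
    exact hxe j hj
  have key : ∀ c : Fin (n + 1) → R, (∀ i, c i ∈ I) →
      ∀ S : Finset (Fin (n + 1)), (∏ i ∈ S, c i) * ∏ i ∈ univ \ S, x i = 0 := by
    intro c hc S
    induction S using Finset.strongInduction with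
    | _ S ih =>
    rcases S.eq_empty_or_nonempty with rfl | ⟨i0, hi0⟩
    · simpa using hx0
    by_contra hne
    set d : Fin (n + 1) → R := fun i => if i ∈ S then c i else 0 with hd
    have hdt : ∀ t : Finset (Fin (n + 1)), ¬ t ⊆ S → (∏ i ∈ t, d i) = 0 := by
      intro t ht
      obtain ⟨i, hit, hiS⟩ := Finset.not_subset.mp ht
      exact Finset.prod_eq_zero hit (by simp [hd, hiS])
    have hdc : ∀ t ⊆ S, (∏ i ∈ t, d i) = ∏ i ∈ t, c i :=
      fun t ht => Finset.prod_congr rfl fun i hi => if_pos (ht hi)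
    have hdI : ∀ t : Finset (Fin (n + 1)), t.Nonempty → (∏ i ∈ t, d i) ∈ I := by
      rintro t ⟨i, hi⟩
      by_cases hts : t ⊆ S
      · rw [hdc t hts, ← Finset.mul_prod_erase t c hi]
        exact Ideal.mul_mem_right _ _ (hc i)
      · rw [hdt t hts]; exact I.zero_mem
    have hexp : ∀ s : Finset (Fin (n + 1)),
        (∏ i ∈ s, (d i + x i)) = ∑ t ∈ s.powerset, (∏ i ∈ t, d i) * ∏ i ∈ s \ t, x i :=
      fun s => Finset.prod_add d x s
    have hprod : (∏ i, (d i + x i)) = (∏ i ∈ S, c i) * ∏ i ∈ univ \ S, x i := by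
      rw [hexp, Finset.sum_eq_single S]
      · rw [hdc S le_rfl]
      · intro t ht hts
        by_cases h' : t ⊆ S
        · rw [hdc t h', ih t (h'.ssubset_of_ne hts)]
        · rw [hdt t h', zero_mul]
      · intro h; exact absurd (Finset.mem_powerset.mpr (Finset.subset_univ S)) h
    have hney : (∏ i, (d i + x i)) ≠ 0 := hprod ▸ hne
    have hneI : (∏ i, (d i + x i)) ∈ I := by
      rw [hprod]
      exact Ideal.mul_mem_right _ _
        (by rw [← Finset.mul_prod_erase S c hi0]; exact Ideal.mul_mem_right _ _ (hc i0))
    obtain ⟨j, hj⟩ := hweak _ hney hneI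
    have h2 : (∏ i ∈ univ.erase j, (d i + x i)) =
        (∏ i ∈ univ.erase j, x i) +
        ∑ t ∈ ((univ.erase j).powerset).erase ∅,
          (∏ i ∈ t, d i) * ∏ i ∈ (univ.erase j) \ t, x i := by
      rw [hexp, ← Finset.add_sum_erase _ _ (Finset.mem_powerset.mpr (Finset.empty_subset _))]
      simp
    have hsumI : (∑ t ∈ ((univ.erase j).powerset).erase ∅,
        (∏ i ∈ t, d i) * ∏ i ∈ (univ.erase j) \ t, x i) ∈ I := by
      refine Ideal.sum_mem _ fun t ht => ?_
      exact Ideal.mul_mem_right _ _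
        (hdI t (Finset.nonempty_iff_ne_empty.mpr (Finset.mem_erase.mp ht).1))
    have hfin := I.sub_mem hj hsumI
    rw [h2, add_sub_cancel_right] at hfin
    exact hxe j hfin
  apply le_antisymm
  · intro a ha
    obtain ⟨m, hm⟩ := ha
    have h := key (fun _ => a ^ m) (fun _ => hm) univ
    simp only [Finset.sdiff_self, Finset.prod_empty, mul_one, Finset.prod_const,
      Finset.card_univ, Fintype.card_fin] at h
    rw [mem_nilradical]
    exact ⟨m * (n + 1), by rwa [pow_mul]⟩
  · exact Ideal.radical_mono bot_le
end

section
/- Let I be a weakly n-absorbing ideal of a commutative ring R that is not an n-absorbing ideal, and let M be an R-module with IM = M. Then M = {0}. -/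
open Finset Polynomial

lemma pow_ann {R : Type*} [CommRing R] {I : Ideal R} :
    ∀ (m : ℕ) (c : R), (∀ x : Fin m → R, (∀ i, x i ∈ I) → c * ∏ i, x i = 0) →
    ∀ y ∈ I ^ m, c * y = 0 := by
  intro m
  induction m with
  | zero =>
    intro c hc y hy
    have h1 : c = 0 := by simpa using hc (fun i => 1) (fun i => i.elim0)
    simp [h1]
  | succ m ih =>
    intro c hc y hy
    rw [pow_succ] at hy
    refine Submodule.mul_induction_on hy ?_ ?_
    · intro z hz w hw
      have : (c * w) * z = 0 := by
        refine ih (c * w) (fun x hx => ?_) z hz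
        have := hc (Fin.cons w x) (fun i => Fin.cases hw hx i)
        rw [Fin.prod_cons] at this
        linear_combination this
      linear_combination this
    · intro u v hu hv
      rw [mul_add, hu, hv, add_zero]

lemma key_zero {R : Type*} [CommRing R] {n : ℕ} {I : Ideal R}
    (hI : WeaklyAbsorbing n I) (a : Fin (n + 1) → R) (ha0 : ∏ i, a i = 0)
    (hmiss : ∀ j, (∏ i ∈ univ.erase j, a i) ∉ I) :
    ∀ (S : Finset (Fin (n + 1))) (x : Fin (n + 1) → R), (∀ i ∈ Sᶜ, x i ∈ I) →
      (∏ i ∈ S, a i) * ∏ i ∈ Sᶜ, x i = 0 := by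
  have main : ∀ (k : ℕ) (S : Finset (Fin (n + 1))), Sᶜ.card = k →
      ∀ x : Fin (n + 1) → R, (∀ i ∈ Sᶜ, x i ∈ I) →
      (∏ i ∈ S, a i) * ∏ i ∈ Sᶜ, x i = 0 := by
    intro k
    induction k using Nat.strong_induction_on with
    | _ k ih =>
    intro S hSk x hx
    rcases eq_or_ne (Sᶜ) ∅ with hS | hS
    · have hSuniv : S = univ := by
        rwa [← Finset.compl_eq_empty_iff]
      rw [hS, hSuniv, Finset.prod_empty, mul_one, ha0]
    · by_contra hp
      set b : Fin (n + 1) → R := fun i => if i ∈ S then a i else a i + x i with hb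
      have hexp : ∀ T ∈ Sᶜ.powerset,
          (∏ i ∈ S, a i) * ((∏ i ∈ T, a i) * ∏ i ∈ Sᶜ \ T, x i)
            = (∏ i ∈ S ∪ T, a i) * ∏ i ∈ (S ∪ T)ᶜ, x i := by
        intro T hT
        rw [Finset.mem_powerset] at hT
        have hdisj : Disjoint S T := by
          refine Finset.disjoint_left.mpr fun i hiS hiT => ?_
          exact (Finset.mem_compl.mp (hT hiT)) hiS
        rw [Finset.prod_union hdisj, Finset.compl_union, mul_assoc]
        congr 2
        rw [sdiff_eq, Finset.inf_eq_inter, Finset.inter_comm]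
      have hprodb : ∏ i, b i = (∏ i ∈ S, a i) * ∏ i ∈ Sᶜ, x i := by
        rw [← Finset.prod_mul_prod_compl S b]
        have h1 : ∏ i ∈ S, b i = ∏ i ∈ S, a i :=
          Finset.prod_congr rfl fun i hi => by simp [hb, hi]
        have h2 : ∏ i ∈ Sᶜ, b i = ∏ i ∈ Sᶜ, (a i + x i) :=
          Finset.prod_congr rfl fun i hi => by
            simp [hb, (Finset.mem_compl.mp hi)]
        rw [h1, h2, Finset.prod_add, Finset.mul_sum]
        rw [Finset.sum_eq_single_of_mem ∅ (Finset.empty_mem_powerset _)]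
        · simp
        · intro T hT hTne
          rw [hexp T hT]
          have hTsub := Finset.mem_powerset.mp hT
          obtain ⟨t, ht⟩ := Finset.nonempty_iff_ne_empty.mpr hTne
          have hcard : ((S ∪ T)ᶜ).card < k := by
            rw [← hSk, Finset.compl_union]
            apply Finset.card_lt_card
            refine ⟨Finset.inter_subset_left, fun hsub => ?_⟩
            have ht2 := hsub (hTsub ht)
            exact (Finset.mem_compl.mp (Finset.mem_of_mem_inter_right ht2)) ht
          exact ih _ hcard _ rfl x fun i hi => by
            rw [Finset.compl_union] at hi
            exact hx i (Finset.mem_of_mem_inter_left hi)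
      have hScne : Sᶜ.Nonempty := Finset.nonempty_iff_ne_empty.mpr hS
      obtain ⟨j0, hj0⟩ := hScne
      have hmemI : (∏ i ∈ S, a i) * ∏ i ∈ Sᶜ, x i ∈ I := by
        apply Ideal.mul_mem_left
        rw [← Finset.mul_prod_erase _ _ hj0]
        exact Ideal.mul_mem_right _ _ (hx j0 hj0)
      obtain ⟨j, hj⟩ := hI.2 b (by rw [hprodb]; exact hp) (by rw [hprodb]; exact hmemI)
      apply hmiss j
      have hcong : ∀ i, Ideal.Quotient.mk I (b i) = Ideal.Quotient.mk I (a i) := by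
        intro i
        by_cases hiS : i ∈ S
        · simp [hb, hiS]
        · simp only [hb, hiS, if_neg, ite_false, map_add]
          rw [Ideal.Quotient.eq_zero_iff_mem.mpr (hx i (Finset.mem_compl.mpr hiS)), add_zero]
      have : Ideal.Quotient.mk I (∏ i ∈ univ.erase j, a i) = 0 := by
        rw [map_prod]
        calc ∏ i ∈ univ.erase j, Ideal.Quotient.mk I (a i)
            = ∏ i ∈ univ.erase j, Ideal.Quotient.mk I (b i) :=
              Finset.prod_congr rfl fun i _ => (hcong i).symm
          _ = Ideal.Quotient.mk I (∏ i ∈ univ.erase j, b i) := (map_prod _ _ _).symm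
          _ = 0 := Ideal.Quotient.eq_zero_iff_mem.mpr hj
      exact Ideal.Quotient.eq_zero_iff_mem.mp this
  exact fun S => main (Sᶜ.card) S rfl

theorem stmt14 {R : Type*} [CommRing R] (n : ℕ) (hn : 0 < n) (I : Ideal R)
    (hI : WeaklyAbsorbing n I) (hna : ¬ Absorbing n I)
    (M : Type*) [AddCommGroup M] [Module R M]
    (hIM : I • (⊤ : Submodule R M) = ⊤) :
    ∀ x : M, x = 0 := by
  have hne := hI.1
  rw [Absorbing, not_and] at hna
  push_neg at hna
  obtain ⟨a, haI, hmiss⟩ := hna hne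
  have ha0 : ∏ i, a i = 0 := by
    by_contra h
    obtain ⟨j, hj⟩ := hI.2 a h haI
    exact hmiss j hj
  have hprod : ∀ x : Fin (n + 1) → R, (∀ i, x i ∈ I) → ∏ i, x i = 0 := by
    intro x hx
    have := key_zero hI a ha0 hmiss ∅ x (fun i _ => hx i)
    simpa using this
  have hpow : I ^ (n + 1) = ⊥ := by
    rw [eq_bot_iff]
    intro y hy
    have := pow_ann (n + 1) 1 (fun x hx => by simpa using hprod x hx) y hy
    simpa using this
  have htop : ∀ k : ℕ, (I ^ k) • (⊤ : Submodule R M) = ⊤ := by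
    intro k
    induction k with
    | zero => simp
    | succ k ihk => rw [pow_succ, mul_comm, ← Ideal.smul_eq_mul, Submodule.smul_assoc, ihk, hIM]
  intro x
  have hbot : (⊤ : Submodule R M) = ⊥ := by
    rw [← htop (n + 1), hpow, Submodule.bot_smul]
  have : x ∈ (⊥ : Submodule R M) := hbot ▸ Submodule.mem_top
  simpa using this
end

section
/- Let R be a commutative ring and let I be a weakly n-absorbing ideal of R that is not an n-absorbing ideal. If w ∈ Nil(R), then either wⁿ ∈ I or w^{n-i}·I^{i+1} = {0} for every 0 ≤ i ≤ n−1. -/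
open Finset Polynomial

theorem stmt16 {R : Type*} [CommRing R] (n : ℕ) (hn : 0 < n) (I : Ideal R)
    (hI : WeaklyAbsorbing n I) (hna : ¬ Absorbing n I)
    (w : R) (hw : w ∈ nilradical R) :
    w ^ n ∈ I ∨ ∀ i < n, ∀ y ∈ I ^ (i + 1), w ^ (n - i) * y = 0 := by
  by_cases hwn : w ^ n ∈ I
  · exact Or.inl hwn
  right
  obtain ⟨hItop, hWA⟩ := hI
  obtain ⟨N, hN⟩ := mem_nilradical.1 hw
  have hex : ∃ m, w ^ m ∈ I := ⟨N, by rw [hN]; exact I.zero_mem⟩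
  classical
  set m := Nat.find hex with hm
  have hmI : w ^ m ∈ I := Nat.find_spec hex
  have hmin : ∀ k, k < m → w ^ k ∉ I := fun k hk => Nat.find_min hex hk
  have hnm : n < m := by
    by_contra h
    push_neg at h
    have : w ^ n = w ^ (n - m) * w ^ m := by rw [← pow_add]; congr 1; omega
    exact hwn (this ▸ I.mul_mem_left _ hmI)
  -- helper facts about the exponent functions
  have hEsum : ∀ j₀ : Fin (n+1), ∑ j, (if j = j₀ then m - n else 1) = m := by
    intro j₀
    rw [← Finset.add_sum_erase _ _ (Finset.mem_univ j₀), if_pos rfl]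
    have h1 : ∑ j ∈ univ.erase j₀, (if j = j₀ then m - n else 1) = ∑ _j ∈ univ.erase j₀, 1 :=
      Finset.sum_congr rfl fun j hj => if_neg (Finset.ne_of_mem_erase hj)
    rw [h1, Finset.sum_const, smul_eq_mul, mul_one, Finset.card_erase_of_mem (Finset.mem_univ j₀),
      Finset.card_univ, Fintype.card_fin]
    omega
  have hEu : ∀ (j₀ : Fin (n+1)) (u : Finset (Fin (n+1))), u.Nonempty →
      ∑ j ∈ u, (if j = j₀ then m - n else 1) + 1 ≤ (m - n) + u.card := by
    intro j₀ u hu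
    by_cases h : j₀ ∈ u
    · rw [← Finset.add_sum_erase _ _ h, if_pos rfl]
      have h1 : ∑ j ∈ u.erase j₀, (if j = j₀ then m - n else 1) = ∑ _j ∈ u.erase j₀, 1 :=
        Finset.sum_congr rfl fun j hj => if_neg (Finset.ne_of_mem_erase hj)
      rw [h1, Finset.sum_const, smul_eq_mul, mul_one, Finset.card_erase_of_mem h]
      have := Finset.card_pos.2 hu
      omega
    · have h1 : ∑ j ∈ u, (if j = j₀ then m - n else 1) = ∑ _j ∈ u, 1 :=
        Finset.sum_congr rfl fun j hj => if_neg (by rintro rfl; exact h hj)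
      rw [h1, Finset.sum_const, smul_eq_mul, mul_one]
      omega
  -- Step 1 : `w ^ m = 0`
  have hm0 : w ^ m = 0 := by
    by_contra h0
    set e : Fin (n+1) → ℕ := fun j => if j = (0 : Fin (n+1)) then m - n else 1 with he
    have hprod : ∏ j, w ^ e j = w ^ m := by
      rw [Finset.prod_pow_eq_pow_sum]
      congr 1
      exact hEsum 0
    obtain ⟨j, hj⟩ := hWA (fun j => w ^ e j)
      (by show (∏ j, w ^ e j) ≠ 0; rw [hprod]; exact h0)
      (by show (∏ j, w ^ e j) ∈ I; rw [hprod]; exact hmI)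
    have hj' : w ^ (∑ j' ∈ univ.erase j, e j') ∈ I := by
      have : ∏ j' ∈ univ.erase j, w ^ e j' ∈ I := hj
      rwa [Finset.prod_pow_eq_pow_sum] at this
    have h1 : e j + ∑ j' ∈ univ.erase j, e j' = m := by
      rw [Finset.add_sum_erase _ _ (Finset.mem_univ j)]
      exact hEsum 0
    have h2 : 1 ≤ e j := by simp only [he]; split <;> omega
    exact hmin _ (by omega) hj'
  -- Key lemma: products of `k` elements of `I` (`1 ≤ k ≤ n`) are killed by `w ^ (n+1-k)`
  have K : ∀ k, 1 ≤ k → k ≤ n → ∀ (s : Finset (Fin (n+1))) (f : Fin (n+1) → R),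
      s.card = k → (∀ j ∈ s, f j ∈ I) → w ^ (n + 1 - k) * ∏ j ∈ s, f j = 0 := by
    intro k
    induction k using Nat.strong_induction_on with
    | _ k ih =>
    intro hk1 hkn s f hcard hfI
    by_contra hne
    obtain ⟨j₀, hj₀⟩ : s.Nonempty := Finset.card_pos.1 (by omega)
    set e : Fin (n+1) → ℕ := fun j => if j = j₀ then m - n else 1 with he
    set f₂ : Fin (n+1) → R := fun j => if j ∈ s then f j else 0 with hf₂
    have hf₂I : ∀ j, f₂ j ∈ I := by
      intro j
      simp only [hf₂]
      split
      · exact hfI _ ‹_›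
      · exact I.zero_mem
    have hf₂s : ∀ u : Finset (Fin (n+1)), u ⊆ s → ∏ j ∈ u, f₂ j = ∏ j ∈ u, f j :=
      fun u hu => Finset.prod_congr rfl fun j hj => if_pos (hu hj)
    have he1 : ∀ j, 1 ≤ e j := by intro j; simp only [he]; split <;> omega
    -- Claim A : the full product collapses to the main term
    have hprodA : ∏ j, (w ^ e j + f₂ j) = w ^ (n + 1 - k) * ∏ j ∈ s, f j := by
      rw [Finset.prod_add]
      rw [Finset.sum_eq_single_of_mem (univ \ s)
        (Finset.mem_powerset.2 (Finset.subset_univ _)) ?h0]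
      · have hss : univ \ (univ \ s) = s := Finset.sdiff_sdiff_eq_self (Finset.subset_univ s)
        have hcnt : ∑ j ∈ univ \ s, e j = n + 1 - k := by
          have h1 : ∑ j ∈ univ \ s, e j = ∑ _j ∈ univ \ s, 1 :=
            Finset.sum_congr rfl fun j hj => if_neg (by
              rintro rfl
              exact (Finset.mem_sdiff.1 hj).2 hj₀)
          rw [h1, Finset.sum_const, smul_eq_mul, mul_one,
            Finset.card_sdiff_of_subset (Finset.subset_univ s), Finset.card_univ, Fintype.card_fin, hcard]
        rw [hss, hf₂s s (Finset.Subset.refl s), Finset.prod_pow_eq_pow_sum, hcnt]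
      case h0 =>
        intro t ht htne
        by_cases hus : univ \ t ⊆ s
        · by_cases hu0 : univ \ t = ∅
          · have htu : t = univ := by
              have h1 := Finset.sdiff_eq_empty_iff_subset.1 hu0
              exact Finset.eq_univ_of_forall fun x => h1 (Finset.mem_univ x)
            have : ∏ j ∈ t, w ^ e j = 0 := by
              rw [htu, Finset.prod_pow_eq_pow_sum]
              have : ∑ j, e j = m := hEsum j₀
              rw [this, hm0]
            rw [this, zero_mul]
          · have hune : (univ \ t).Nonempty := Finset.nonempty_iff_ne_empty.2 hu0
            set u := univ \ t with hu
            have htu : t = univ \ u := by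
              rw [hu, Finset.sdiff_sdiff_eq_self (Finset.mem_powerset.1 ht)]
            have husn : u ≠ s := fun h => htne (by rw [htu, h])
            have hlt : u.card < k := by
              rw [← hcard]
              exact Finset.card_lt_card (ssubset_of_subset_of_ne hus husn)
            have h1u : 1 ≤ u.card := Finset.card_pos.2 hune
            have ihu := ih u.card hlt h1u (by omega) u f rfl (fun j hj => hfI j (hus hj))
            have hsum : ∑ j ∈ t, e j + ∑ j ∈ u, e j = m := by
              rw [htu, Finset.sum_sdiff (Finset.subset_univ u)]
              exact hEsum j₀
            have hbd : ∑ j ∈ u, e j + 1 ≤ (m - n) + u.card := by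
              simp only [he]; exact hEu j₀ u hune
            rw [hf₂s u hus, Finset.prod_pow_eq_pow_sum]
            calc w ^ (∑ j ∈ t, e j) * ∏ j ∈ u, f j
                = w ^ (∑ j ∈ t, e j - (n + 1 - u.card)) *
                    (w ^ (n + 1 - u.card) * ∏ j ∈ u, f j) := by
                  rw [← mul_assoc, ← pow_add]
                  congr 2
                  omega
              _ = 0 := by rw [ihu, mul_zero]
        · obtain ⟨j, hju, hjs⟩ := Finset.not_subset.1 hus
          have hz : f₂ j = 0 := by simp only [hf₂]; exact if_neg hjs
          rw [Finset.prod_eq_zero hju hz, mul_zero]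
    have hprodI : ∏ j ∈ s, f j ∈ I := by
      rw [← Finset.mul_prod_erase s f hj₀]
      exact I.mul_mem_right _ (hfI _ hj₀)
    obtain ⟨j, hj⟩ := hWA (fun j => w ^ e j + f₂ j)
      (by show (∏ j, (w ^ e j + f₂ j)) ≠ 0; rw [hprodA]; exact hne)
      (by show (∏ j, (w ^ e j + f₂ j)) ∈ I; rw [hprodA]; exact I.mul_mem_left _ hprodI)
    -- Claim B : the erased product forces a small power of `w` into `I`
    have hj1 : ∏ j' ∈ univ.erase j, (w ^ e j' + f₂ j') ∈ I := hj
    have hBexp : ∏ j' ∈ univ.erase j, (w ^ e j' + f₂ j') =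
        w ^ (∑ j' ∈ univ.erase j, e j') +
          ∑ t ∈ ((univ.erase j).powerset).erase (univ.erase j),
            (∏ j' ∈ t, w ^ e j') * ∏ j' ∈ (univ.erase j) \ t, f₂ j' := by
      rw [Finset.prod_add, ← Finset.add_sum_erase _ _ (Finset.mem_powerset_self (univ.erase j)),
        Finset.sdiff_self, Finset.prod_empty, mul_one, Finset.prod_pow_eq_pow_sum]
    rw [hBexp] at hj1
    have hrest : ∑ t ∈ ((univ.erase j).powerset).erase (univ.erase j),
        (∏ j' ∈ t, w ^ e j') * ∏ j' ∈ (univ.erase j) \ t, f₂ j' ∈ I := by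
      refine Ideal.sum_mem _ fun t ht => ?_
      have ht1 := Finset.mem_powerset.1 (Finset.mem_of_mem_erase ht)
      have ht2 := Finset.ne_of_mem_erase ht
      have hune : ((univ.erase j) \ t).Nonempty := by
        rw [Finset.nonempty_iff_ne_empty]
        intro h
        exact ht2 (Finset.Subset.antisymm ht1 (Finset.sdiff_eq_empty_iff_subset.1 h))
      obtain ⟨j', hj'⟩ := hune
      rw [← Finset.mul_prod_erase _ _ hj']
      exact I.mul_mem_left _ (I.mul_mem_right _ (hf₂I j'))
    have hpow : w ^ (∑ j' ∈ univ.erase j, e j') ∈ I := by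
      have := Ideal.sub_mem _ hj1 hrest
      simpa using this
    have h1 : e j + ∑ j' ∈ univ.erase j, e j' = m := by
      rw [Finset.add_sum_erase _ _ (Finset.mem_univ j)]
      exact hEsum j₀
    exact hmin _ (by have := he1 j; omega) hpow
  -- pass from finite products to powers of the ideal
  have L : ∀ k, k ≤ n → ∀ c : R,
      (∀ (s : Finset (Fin (n+1))) (f : Fin (n+1) → R), s.card = k →
        (∀ j ∈ s, f j ∈ I) → c * ∏ j ∈ s, f j = 0) → ∀ y ∈ I ^ k, c * y = 0 := by
    intro k
    induction k with
    | zero =>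
      intro _ c hc y hy
      have h0 : c = 0 := by
        have := hc ∅ (fun _ => 1) rfl (by simp)
        simpa using this
      rw [h0, zero_mul]
    | succ k ihk =>
      intro hkn c hc y hy
      rw [pow_succ] at hy
      refine Submodule.mul_induction_on hy ?_ ?_
      · intro a ha b hb
        have h1 : ∀ (s : Finset (Fin (n+1))) (f : Fin (n+1) → R), s.card = k →
            (∀ j ∈ s, f j ∈ I) → (c * b) * ∏ j ∈ s, f j = 0 := by
          intro s f hcard hfI
          obtain ⟨j, hjs⟩ : ∃ j, j ∉ s := by
            by_contra h
            push_neg at h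
            have hsu : s = univ := Finset.eq_univ_of_forall h
            rw [hsu, Finset.card_univ, Fintype.card_fin] at hcard
            omega
          have hmain := hc (insert j s) (Function.update f j b)
            (by rw [Finset.card_insert_of_notMem hjs, hcard])
            (by
              intro j' hj'
              rcases Finset.mem_insert.1 hj' with h | h
              · subst h; rw [Function.update_self]; exact hb
              · rw [Function.update_of_ne (by rintro rfl; exact hjs h)]; exact hfI _ h)
          rw [Finset.prod_insert hjs, Function.update_self] at hmain
          have h2 : ∏ j' ∈ s, Function.update f j b j' = ∏ j' ∈ s, f j' :=
            Finset.prod_congr rfl fun j' hj' =>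
              Function.update_of_ne (by rintro rfl; exact hjs hj') _ _
          rw [h2] at hmain
          calc (c * b) * ∏ j' ∈ s, f j' = c * (b * ∏ j' ∈ s, f j') := by ring
            _ = 0 := hmain
        have hres := ihk (by omega) (c * b) h1 a ha
        calc c * (a * b) = (c * b) * a := by ring
          _ = 0 := hres
      · intro p q hp hq
        rw [mul_add, hp, hq, add_zero]
  intro i hi y hy
  have hK' : ∀ (s : Finset (Fin (n+1))) (f : Fin (n+1) → R), s.card = i + 1 →
      (∀ j ∈ s, f j ∈ I) → w ^ (n - i) * ∏ j ∈ s, f j = 0 := by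
    intro s f hc hf
    have := K (i + 1) (by omega) (by omega) s f hc hf
    rwa [show n + 1 - (i + 1) = n - i by omega] at this
  exact L (i + 1) (by omega) (w ^ (n - i)) hK' y hy
end

section
/- Let R be a commutative ring and x₁,…,x_{n+1} ∈ Jac(R), the Jacobson radical of R. Then the principal ideal x₁⋯x_{n+1}R is a weakly n-absorbing ideal of R if and only if x₁⋯x_{n+1} = 0. -/
open Finset Polynomial

theorem stmt17 {R : Type*} [CommRing R] [Nontrivial R] (n : ℕ) (hn : 0 < n)
    (x : Fin (n + 1) → R) (hx : ∀ i, x i ∈ Ideal.jacobson (⊥ : Ideal R)) :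
    WeaklyAbsorbing n (Ideal.span {∏ i, x i}) ↔ ∏ i, x i = 0 := by
  constructor
  · rintro ⟨-, h⟩
    by_contra hp
    obtain ⟨j, hj⟩ := h x hp (Ideal.subset_span rfl)
    rw [Ideal.mem_span_singleton] at hj
    obtain ⟨c, hc⟩ := hj
    set q := ∏ i ∈ univ.erase j, x i with hq
    have hpq : ∏ i, x i = x j * q := (Finset.mul_prod_erase univ x (mem_univ j)).symm
    have hu : IsUnit (x j * (-c) + 1) := (Ideal.mem_jacobson_bot.mp (hx j)) (-c)
    have h0 : q * (x j * (-c) + 1) = 0 := by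
      have : q = x j * q * c := by rw [← hpq]; exact hc
      linear_combination this
    have hq0 : q = 0 := by
      exact (IsUnit.mul_left_eq_zero hu).mp h0
    exact hp (by rw [hpq, hq0, mul_zero])
  · intro hp
    rw [hp, Ideal.span_singleton_eq_bot.mpr rfl]
    exact ⟨bot_ne_top, fun a ha ha' => absurd ((Submodule.mem_bot R).mp ha') ha⟩
end

section
/- Let (R, M) be a quasi-local (local) commutative ring and n a positive integer. Then every proper ideal of R is a weakly n-absorbing ideal of R if and only if M^{n+1} = {0}. -/
open Finset Polynomial

lemma pow_le_of_prods {R : Type*} [CommRing R] :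
    ∀ (k : ℕ) (M J : Ideal R),
      (∀ f : Fin k → R, (∀ i, f i ∈ M) → (∏ i, f i) ∈ J) → M ^ k ≤ J := by
  intro k
  induction k with
  | zero =>
    intro M J h
    have h1 : (1 : R) ∈ J := by simpa using h (fun i => 1) (fun i => i.elim0)
    simp [(Ideal.eq_top_iff_one J).mpr h1]
  | succ k ih =>
    intro M J h
    rw [pow_succ, Ideal.mul_le]
    intro y hy x hx
    have : y ∈ J.colon (Ideal.span {x}) := by
      refine ih M _ (fun f hf => ?_) hy
      rw [Ideal.mem_colon_span_singleton]
      have h2 := h (Fin.snoc f x) (fun i => by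
        refine Fin.lastCases ?_ (fun i => ?_) i <;> simp [hf, hx])
      rw [Fin.prod_univ_castSucc, Fin.snoc_last] at h2
      simpa [Fin.snoc_castSucc] using h2
    rwa [Ideal.mem_colon_span_singleton] at this

theorem stmt18 {R : Type*} [CommRing R] [IsLocalRing R] (n : ℕ) (hn : 0 < n) :
    (∀ I : Ideal R, I ≠ ⊤ → WeaklyAbsorbing n I) ↔
      (IsLocalRing.maximalIdeal R) ^ (n + 1) = ⊥ := by
  set M := IsLocalRing.maximalIdeal R
  constructor
  · intro h
    refine le_bot_iff.mp (pow_le_of_prods (n+1) M ⊥ (fun f hf => ?_))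
    by_contra hp
    rw [Ideal.mem_bot] at hp
    set p := ∏ i, f i with hpdef
    have hpM : p ∈ M := by
      rw [hpdef, ← Finset.mul_prod_erase univ f (Finset.mem_univ 0)]
      exact M.mul_mem_right _ (hf 0)
    have hIt : Ideal.span {p} ≠ ⊤ := fun ht => by
      have : (1:R) ∈ M := by
        have := (Ideal.span_singleton_le_iff_mem M).mpr hpM
        rw [ht] at this
        exact this Submodule.mem_top
      exact (IsLocalRing.maximalIdeal.isMaximal R).ne_top (Ideal.eq_top_iff_one _ |>.mpr this)
    obtain ⟨j, hj⟩ := (h _ hIt).2 f hp (Ideal.mem_span_singleton_self p)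
    obtain ⟨r, hr⟩ := Ideal.mem_span_singleton'.mp hj
    set q := ∏ i ∈ univ.erase j, f i with hqdef
    have hpq : p = f j * q := (Finset.mul_prod_erase univ f (Finset.mem_univ j)).symm
    have hu : IsUnit (1 - r * f j) := by
      by_contra hnu
      have : (1 - r * f j) ∈ M := hnu
      have : (1:R) ∈ M := by
        have := M.add_mem this (M.mul_mem_left r (hf j))
        simpa using this
      exact (IsLocalRing.maximalIdeal.isMaximal R).ne_top (Ideal.eq_top_iff_one _ |>.mpr this)
    have hq0 : q * (1 - r * f j) = 0 := by
      have : q = r * (f j * q) := by rw [← hpq, hr]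
      linear_combination this
    have : q = 0 := by
      obtain ⟨u, hu'⟩ := hu
      have h3 := congrArg (fun z => z * ((u⁻¹ : Rˣ) : R)) hq0
      simpa [← hu', mul_assoc] using h3
    exact hp (by rw [hpq, this, mul_zero])
  · intro h
    intro I hI
    refine ⟨hI, fun a hne hmem => ?_⟩
    have : ¬ ∀ i, a i ∈ M := by
      intro hall
      apply hne
      have : (∏ i, a i) ∈ M ^ (n+1) := by
        have := Ideal.prod_mem_prod (fun i (_ : i ∈ univ) => hall i)
        simpa [Finset.prod_const] using this
      rw [h, Ideal.mem_bot] at this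
      exact this
    push_neg at this
    obtain ⟨j, hj⟩ := this
    have hu : IsUnit (a j) := by
      by_contra hnu
      exact hj hnu
    obtain ⟨u, hu'⟩ := hu
    refine ⟨j, ?_⟩
    have key : (↑u⁻¹ : R) * ∏ i, a i = ∏ i ∈ univ.erase j, a i := by
      rw [← Finset.mul_prod_erase univ a (Finset.mem_univ j), ← mul_assoc, ← hu']
      simp
    rw [← key]
    exact I.mul_mem_left _ hmem
end

section
/- Let R₁,…,R_{n+1} be commutative rings with identity and R = R₁ × ⋯ × R_{n+1}. Then every proper ideal of R is a weakly n-absorbing ideal of R if and only if each R_i is a field. -/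
open Finset Polynomial

theorem stmt19 (n : ℕ) (hn : 0 < n) (A : Fin (n + 1) → Type*)
    [∀ i, CommRing (A i)] [∀ i, Nontrivial (A i)] :
    (∀ I : Ideal (∀ i, A i), I ≠ ⊤ → WeaklyAbsorbing n I) ↔
      ∀ i, IsField (A i) := by
  classical
  constructor
  · intro h k
    by_contra hk
    obtain ⟨J, hJb, hJt⟩ := Ring.not_isField_iff_exists_ideal_bot_lt_and_lt_top.mp hk
    obtain ⟨a, haJ, ha0⟩ := SetLike.exists_of_lt hJb
    have ha0' : a ≠ 0 := by simpa [Ideal.mem_bot] using ha0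
    set I : Ideal (∀ i, A i) :=
      { carrier := {x | x k ∈ J ∧ ∀ i, i ≠ k → x i = 0}
        add_mem' := fun hx hy => ⟨J.add_mem hx.1 hy.1,
          fun i hi => by rw [Pi.add_apply, hx.2 i hi, hy.2 i hi, add_zero]⟩
        zero_mem' := ⟨J.zero_mem, fun i _ => rfl⟩
        smul_mem' := fun c x hx => ⟨J.mul_mem_left (c k) hx.1,
          fun i hi => by show c i * x i = 0; rw [hx.2 i hi, mul_zero]⟩ } with hIdef
    have hItop : I ≠ ⊤ := by
      intro ht
      have h1 : (1 : ∀ i, A i) ∈ I := ht ▸ Submodule.mem_top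
      exact hJt.ne (J.eq_top_iff_one.mpr h1.1)
    set d : ∀ i, A i := Pi.single k a with hd
    set c : Fin (n + 1) → (∀ i, A i) := fun j i => if j = i then d i else 1 with hc
    have hprod : (∏ j, c j) = d := by
      funext m
      rw [Finset.prod_apply]
      simp [hc]
    have hdI : d ∈ I := by
      refine ⟨by simpa [hd] using haJ, fun i hi => ?_⟩
      simp [hd, Pi.single_eq_of_ne hi]
    have hdne : d ≠ 0 := by
      intro h0
      apply ha0'
      have := congrFun h0 k
      simpa [hd] using this
    obtain ⟨j, hj⟩ := (h I hItop).2 c (by rw [hprod]; exact hdne) (by rw [hprod]; exact hdI)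
    have hpj : (∏ i ∈ univ.erase j, c i) j = 1 := by
      rw [Finset.prod_apply]
      refine Finset.prod_eq_one fun i hi => ?_
      have : i ≠ j := (Finset.mem_erase.mp hi).1
      simp [hc, this]
    by_cases hjk : j = k
    · subst hjk
      have := hj.1
      rw [hpj] at this
      exact hJt.ne (J.eq_top_iff_one.mpr this)
    · have := hj.2 j hjk
      rw [hpj] at this
      exact one_ne_zero this
  · intro hF I hI
    refine ⟨hI, ?_⟩
    intro a hne hmem
    set S : Finset (Fin (n + 1)) := univ.filter (fun i => ∀ x ∈ I, x i = 0) with hS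
    have memI : ∀ x : ∀ i, A i, (∀ i ∈ S, x i = 0) → x ∈ I := by
      intro x hx
      have hsingle : ∀ i, i ∉ S → Pi.single i (1 : A i) ∈ I := by
        intro i hi
        simp only [hS, mem_filter, mem_univ, true_and] at hi
        push_neg at hi
        obtain ⟨y, hyI, hyi⟩ := hi
        obtain ⟨b, hb⟩ := (hF i).mul_inv_cancel hyi
        have hmm : Pi.single i b * y ∈ I := I.mul_mem_left _ hyI
        have he : Pi.single i b * y = Pi.single i (1 : A i) := by
          funext m
          by_cases hm : m = i
          · subst hm
            show Pi.single m b m * y m = Pi.single m (1 : A m) m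
            rw [Pi.single_eq_same, Pi.single_eq_same, mul_comm]
            exact hb
          · show Pi.single i b m * y m = Pi.single i (1 : A i) m
            rw [Pi.single_eq_of_ne hm, Pi.single_eq_of_ne hm, zero_mul]
        rwa [he] at hmm
      have hx' : x = ∑ i ∈ Sᶜ, x * Pi.single i (1 : A i) := by
        funext m
        rw [Finset.sum_apply]
        by_cases hm : m ∈ S
        · rw [hx m hm]
          refine (Finset.sum_eq_zero fun i hi => ?_).symm
          have : i ≠ m := by rintro rfl; exact (Finset.mem_compl.mp hi) hm
          show x m * Pi.single i (1 : A i) m = 0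
          rw [Pi.single_eq_of_ne (Ne.symm this), mul_zero]
        · rw [Finset.sum_eq_single m]
          · show x m = x m * Pi.single m (1 : A m) m
            rw [Pi.single_eq_same, mul_one]
          · intro i _ hne'
            show x m * Pi.single i (1 : A i) m = 0
            rw [Pi.single_eq_of_ne (Ne.symm hne'), mul_zero]
          · intro hmem'
            exact absurd (Finset.mem_compl.mpr hm) hmem'
      rw [hx']
      exact Ideal.sum_mem _ fun i hi => I.mul_mem_left _ (hsingle i (Finset.mem_compl.mp hi))
    have hz : ∀ i ∈ S, ∃ j, a j i = 0 := by
      intro i hi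
      have h0 : (∏ j, a j) i = 0 := by
        simp only [hS, mem_filter] at hi
        exact hi.2 _ hmem
      rw [Finset.prod_apply] at h0
      letI := (hF i).toField
      obtain ⟨j, _, hj⟩ := Finset.prod_eq_zero_iff.mp h0
      exact ⟨j, hj⟩
    choose f hf using hz
    by_cases hsurj : ∀ j, ∃ i, ∃ hi : i ∈ S, f i hi = j
    · exfalso
      have hsur : Function.Surjective (fun p : {i // i ∈ S} => f p.1 p.2) := by
        intro j
        obtain ⟨i, hi, hfi⟩ := hsurj j
        exact ⟨⟨i, hi⟩, hfi⟩
      have hcard := Fintype.card_le_of_surjective _ hsur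
      rw [Fintype.card_coe, Fintype.card_fin] at hcard
      have hScard : S.card = n + 1 :=
        le_antisymm (by simpa using Finset.card_le_univ S) hcard
      have hSuniv : S = univ := Finset.eq_univ_of_card _ (by simpa using hScard)
      apply hne
      funext m
      have hm : m ∈ S := hSuniv ▸ mem_univ m
      simp only [hS, mem_filter] at hm
      exact hm.2 _ hmem
    · push_neg at hsurj
      obtain ⟨j₀, hj₀⟩ := hsurj
      refine ⟨j₀, memI _ fun i hi => ?_⟩
      rw [Finset.prod_apply]
      exact Finset.prod_eq_zero (Finset.mem_erase.mpr ⟨hj₀ i hi, mem_univ _⟩) (hf i hi)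
end
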